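/- Let c ∈ ℝ, let n ≥ 1 be an integer, and let f : [0,π] → ℝ be continuously differentiable. Then ∫₀^π (−f'(x) + c f(x)) · √(2/π) sin(nx) dx = √(n² + c²) · ∫₀^π f(x) ψ_n(x) dx, where ψ_n(x) := (n² + c²)^{−1/2} √(2/π) (n cos(nx) + c sin(nx)). -/

import Mathlib

noncomputable section

open MeasureTheory intervalIntegral Set

/-- The Robin eigenfunctions `ψ_n = (n²+c²)^{-1/2} A φ_n^D` on `[0,π]`. -/
def robinEigen (c : ℝ) (n : ℕ) (x : ℝ) : ℝ :=
  (Real.sqrt ((n : ℝ) ^ 2 + c ^ 2))⁻¹ * Real.sqrt (2 / Real.pi) *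
    ((n : ℝ) * Real.cos ((n : ℝ) * x) + c * Real.sin ((n : ℝ) * x))

theorem intertwining_dirichlet_robin (c : ℝ) (n : ℕ) (hn : 1 ≤ n) (f : ℝ → ℝ)
    (hf : ContDiffOn ℝ 1 f (Set.Icc 0 Real.pi)) :
    ∫ x in (0 : ℝ)..Real.pi,
        (-(deriv f x) + c * f x) * (Real.sqrt (2 / Real.pi) * Real.sin ((n : ℝ) * x)) =
      Real.sqrt ((n : ℝ) ^ 2 + c ^ 2) *
        ∫ x in (0 : ℝ)..Real.pi, f x * robinEigen c n x := by
  have hpi : (0 : ℝ) ≤ Real.pi := Real.pi_pos.le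
  have huIcc : Set.uIcc (0 : ℝ) Real.pi = Set.Icc 0 Real.pi := Set.uIcc_of_le hpi
  set g : ℝ → ℝ := fun x => derivWithin f (Set.Icc 0 Real.pi) x with hg
  set s : ℝ → ℝ := fun x => Real.sqrt (2 / Real.pi) * Real.sin ((n : ℝ) * x) with hs
  set s' : ℝ → ℝ := fun x => Real.sqrt (2 / Real.pi) * ((n : ℝ) * Real.cos ((n : ℝ) * x))
    with hs'
  have hgcont : ContinuousOn g (Set.Icc 0 Real.pi) :=
    hf.continuousOn_derivWithin (uniqueDiffOn_Icc Real.pi_pos) le_rfl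
  have hfcont : ContinuousOn f (Set.Icc 0 Real.pi) := hf.continuousOn
  have hderiv : ∀ x ∈ Set.Ioo (0 : ℝ) Real.pi, HasDerivAt f (g x) x := by
    intro x hx
    have h1 : DifferentiableWithinAt ℝ f (Set.Icc 0 Real.pi) x :=
      (hf.differentiableOn one_ne_zero) x (Set.mem_Icc_of_Ioo hx)
    have h2 : DifferentiableAt ℝ f x := h1.differentiableAt (Icc_mem_nhds hx.1 hx.2)
    have : deriv f x = g x := by
      rw [hg]
      exact (h2.derivWithin ((uniqueDiffOn_Icc Real.pi_pos) x (Set.mem_Icc_of_Ioo hx))).symm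
    rw [← this]
    exact h2.hasDerivAt
  have hsderiv : ∀ x : ℝ, HasDerivAt s (s' x) x := by
    intro x
    have h1 : HasDerivAt (fun x : ℝ => Real.sin ((n : ℝ) * x))
        (Real.cos ((n : ℝ) * x) * ((n : ℝ) * 1)) x :=
      (Real.hasDerivAt_sin _).comp x ((hasDerivAt_id x).const_mul (n : ℝ))
    have h2 := h1.const_mul (Real.sqrt (2 / Real.pi))
    refine h2.congr_deriv ?_
    simp only [hs']
    ring
  have hgint : IntervalIntegrable g volume 0 Real.pi :=
    (hgcont.mono huIcc.subset).intervalIntegrable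
  have hsint : IntervalIntegrable s' volume 0 Real.pi := by
    apply Continuous.intervalIntegrable
    fun_prop
  -- Integration by parts
  have hparts : ∫ x in (0:ℝ)..Real.pi, (g x * s x + f x * s' x) = 0 := by
    have := integral_deriv_mul_eq_sub_of_hasDerivAt (a := 0) (b := Real.pi)
      (u := f) (v := s) (u' := g) (v' := s')
      (hfcont.mono huIcc.subset)
      (Continuous.continuousOn (by fun_prop))
      (by simpa [hpi, min_eq_left, max_eq_right] using hderiv)
      (fun x _ => hsderiv x) hgint hsint
    rw [this]
    simp [hs, Real.sin_nat_mul_pi]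
  have hgints : IntervalIntegrable (fun x => g x * s x) volume 0 Real.pi :=
    hgint.mul_continuousOn (by exact Continuous.continuousOn (by fun_prop))
  have hfsint : IntervalIntegrable (fun x => f x * s' x) volume 0 Real.pi :=
    ((hfcont.mono huIcc.subset).mul (Continuous.continuousOn (by fun_prop))).intervalIntegrable
  have hsplit : (∫ x in (0:ℝ)..Real.pi, g x * s x) = - ∫ x in (0:ℝ)..Real.pi, f x * s' x := by
    have := intervalIntegral.integral_add hgints hfsint
    rw [this] at hparts
    linarith
  -- Replace deriv f with g in the LHS (they agree on the open interval)
  have hcongr : ∫ x in (0:ℝ)..Real.pi, (-(deriv f x) + c * f x) * s x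
      = ∫ x in (0:ℝ)..Real.pi, (-(g x) + c * f x) * s x := by
    apply intervalIntegral.integral_congr_ae
    have hIoo : ∀ᵐ x ∂volume, x ∈ Set.Ioc (0:ℝ) Real.pi → x ∈ Set.Ioo (0:ℝ) Real.pi := by
      have hmeas : volume ({Real.pi} : Set ℝ) = 0 := measure_singleton _
      filter_upwards [measure_eq_zero_iff_ae_notMem.mp hmeas] with x hx hx2
      exact ⟨hx2.1, lt_of_le_of_ne hx2.2 (by simpa using hx)⟩
    filter_upwards [hIoo] with x hx hx2
    have hx3 : x ∈ Set.Ioo (0:ℝ) Real.pi := hx (by rwa [Set.uIoc_of_le hpi] at hx2)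
    have := (hderiv x hx3).deriv
    rw [this]
  rw [hcongr]
  have hlam : (0:ℝ) < (n : ℝ) ^ 2 + c ^ 2 := by
    have : (1:ℝ) ≤ (n:ℝ) := by exact_mod_cast hn
    nlinarith [sq_nonneg c]
  have hsq : Real.sqrt ((n : ℝ) ^ 2 + c ^ 2) ≠ 0 :=
    ne_of_gt (Real.sqrt_pos.mpr hlam)
  -- Rewrite the RHS integral
  have hRHS : ∫ x in (0:ℝ)..Real.pi, f x * robinEigen c n x
      = (Real.sqrt ((n : ℝ) ^ 2 + c ^ 2))⁻¹ *
        ∫ x in (0:ℝ)..Real.pi, f x * (s' x + c * s x) := by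
    rw [← intervalIntegral.integral_const_mul]
    apply intervalIntegral.integral_congr
    intro x _
    simp only [robinEigen, hs, hs']
    ring
  rw [hRHS, ← mul_assoc, mul_inv_cancel₀ hsq, one_mul]
  have hLHS : ∫ x in (0:ℝ)..Real.pi, (-(g x) + c * f x) * s x
      = - (∫ x in (0:ℝ)..Real.pi, g x * s x) + c * ∫ x in (0:ℝ)..Real.pi, f x * s x := by
    have hfsint2 : IntervalIntegrable (fun x => f x * s x) volume 0 Real.pi :=
      ((hfcont.mono huIcc.subset).mul (Continuous.continuousOn (by fun_prop))).intervalIntegrable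
    have h1 : (fun x => (-(g x) + c * f x) * s x)
        = fun x => -(g x * s x) + c * (f x * s x) := by funext x; ring
    calc ∫ x in (0:ℝ)..Real.pi, (-(g x) + c * f x) * s x
        = ∫ x in (0:ℝ)..Real.pi, (-(g x * s x) + c * (f x * s x)) := by rw [h1]
      _ = (∫ x in (0:ℝ)..Real.pi, -(g x * s x))
          + ∫ x in (0:ℝ)..Real.pi, c * (f x * s x) :=
          intervalIntegral.integral_add hgints.neg (hfsint2.const_mul c)
      _ = - (∫ x in (0:ℝ)..Real.pi, g x * s x) + c * ∫ x in (0:ℝ)..Real.pi, f x * s x := by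
          rw [intervalIntegral.integral_neg, intervalIntegral.integral_const_mul]
  rw [hLHS, hsplit, neg_neg]
  have hfsint2 : IntervalIntegrable (fun x => f x * s x) volume 0 Real.pi :=
    ((hfcont.mono huIcc.subset).mul (Continuous.continuousOn (by fun_prop))).intervalIntegrable
  rw [show (fun x => f x * (s' x + c * s x)) = fun x => f x * s' x + c * (f x * s x) by
    funext x; ring]
  rw [intervalIntegral.integral_add hfsint (hfsint2.const_mul c),
    intervalIntegral.integral_const_mul]
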